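/- Let N >= 2, let M be a matching of K_N, let e = uv be an edge of K_N with M ∪ {e} also a matching, let G = K_N△M and G' = K_N△(M ∪ {e}) with new vertex w. If d is a D(G')-draconian sequence with d_w = 2, then both of the sequences obtained from d by deleting coordinate w and adding 1 to d_u, respectively adding 1 to d_v, are D(G)-draconian sequences. -/
import Mathlib


/-- `c : V → ℕ` is a `D(H)`-draconian sequence for the simple graph `H` on `V`:
the entries sum to `|V| - 1` and, for every nonempty `S ⊆ V`, the partial sum over `S`
is strictly less than the size of `⋃_{i ∈ S} N_{D(H)}(i)`, where
`N_{D(H)}(i) = {ī} ∪ {j̄ : ij ∈ E(H)}`. -/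
def DraconianD {V : Type*} [Fintype V] (H : SimpleGraph V) (c : V → ℕ) : Prop :=
  (∑ v, c v) = Fintype.card V - 1 ∧
    ∀ S : Finset V, S.Nonempty →
      (∑ i ∈ S, c i) < ((S : Set V) ∪ ⋃ i ∈ S, H.neighborSet i).ncard

/-- `G △ e` for `e = uv`: add a new vertex (`none`) adjacent to exactly `u` and `v`. -/
def triExt {V : Type*} (G : SimpleGraph V) (u v : V) : SimpleGraph (Option V) :=
  SimpleGraph.fromRel fun a b =>
    (∃ x y, a = some x ∧ b = some y ∧ G.Adj x y) ∨ (a = none ∧ (b = some u ∨ b = some v))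

/-- `K_N △ 𝓜` for a matching `𝓜` with `M` edges `{f i, g i}`: the complete graph on
`Fin N` (the `inl` vertices) together with, for each `i : Fin M`, a new vertex `inr i`
adjacent to exactly `f i` and `g i`. -/
def MatchTri (N M : ℕ) (f g : Fin M → Fin N) : SimpleGraph (Fin N ⊕ Fin M) :=
  SimpleGraph.fromRel fun a b =>
    (∃ x y : Fin N, a = Sum.inl x ∧ b = Sum.inl y ∧ x ≠ y) ∨
    (∃ i : Fin M, a = Sum.inr i ∧ (b = Sum.inl (f i) ∨ b = Sum.inl (g i)))

lemma triExt_adj_some {V : Type*} (G : SimpleGraph V) (su sv x y : V) :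
    (triExt G su sv).Adj (some x) (some y) ↔ G.Adj x y := by
  rw [triExt, SimpleGraph.fromRel_adj]
  constructor
  · rintro ⟨hne, h | h⟩ <;>
      rcases h with ⟨x', y', hx, hy, h⟩ | ⟨h, _⟩ <;>
      simp_all
    exact h.symm
  · intro h
    exact ⟨by simpa using h.ne, Or.inl (Or.inl ⟨x, y, rfl, rfl, h⟩)⟩

lemma triExt_adj_none {V : Type*} (G : SimpleGraph V) (su sv : V) (b : Option V) :
    (triExt G su sv).Adj none b ↔ b = some su ∨ b = some sv := by
  rw [triExt, SimpleGraph.fromRel_adj]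
  constructor
  · rintro ⟨hne, h | h⟩ <;>
      rcases h with ⟨x', y', hx, hy, h⟩ | ⟨h1, h2⟩ <;> simp_all
  · rintro (rfl | rfl) <;> simp

lemma matchTri_adj_inl (N M : ℕ) (f g : Fin M → Fin N) (x y : Fin N) :
    (MatchTri N M f g).Adj (Sum.inl x) (Sum.inl y) ↔ x ≠ y := by
  rw [MatchTri, SimpleGraph.fromRel_adj]
  constructor
  · rintro ⟨hne, _⟩
    simpa using hne
  · intro h
    exact ⟨by simpa using h, Or.inl (Or.inl ⟨x, y, rfl, rfl, h⟩)⟩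

lemma key9 (N M : ℕ) (hN : 2 ≤ N) (f g : Fin M → Fin N) (u v : Fin N) (huv : u ≠ v)
    (d : Option (Fin N ⊕ Fin M) → ℕ)
    (hd : DraconianD (triExt (MatchTri N M f g) (Sum.inl u) (Sum.inl v)) d)
    (h2 : d none = 2) (a : Fin N ⊕ Fin M) (ha : a = Sum.inl u ∨ a = Sum.inl v) :
    DraconianD (MatchTri N M f g) (fun x => d (some x) + if x = a then 1 else 0) := by
  classical
  set G := MatchTri N M f g with hG
  set G' := triExt G (Sum.inl u) (Sum.inl v) with hG'
  obtain ⟨hd1, hd2⟩ := hd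
  rw [Fintype.sum_option] at hd1
  have hcard : Fintype.card (Option (Fin N ⊕ Fin M)) = N + M + 1 := by simp
  have hcard2 : Fintype.card (Fin N ⊕ Fin M) = N + M := by simp
  rw [hcard, h2] at hd1
  constructor
  · rw [Finset.sum_add_distrib, Finset.sum_ite_eq' Finset.univ a fun _ => 1]
    simp only [Finset.mem_univ, if_true]
    rw [hcard2]
    omega
  · intro S hS
    set T : Set (Fin N ⊕ Fin M) := ↑S ∪ ⋃ i ∈ S, G.neighborSet i with hT
    show (∑ i ∈ S, (d (some i) + if i = a then 1 else 0)) < T.ncard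
    rw [Finset.sum_add_distrib, Finset.sum_ite_eq' S a fun _ => 1]
    have hNnone : G'.neighborSet none = {some (Sum.inl u), some (Sum.inl v)} := by
      ext b
      simp only [SimpleGraph.mem_neighborSet, hG', triExt_adj_none, Set.mem_insert_iff,
        Set.mem_singleton_iff]
    have hNsome : ∀ x y : Fin N ⊕ Fin M,
        (some y ∈ G'.neighborSet (some x)) ↔ G.Adj x y := by
      intro x y
      simp only [SimpleGraph.mem_neighborSet, hG', triExt_adj_some]
    have hNsomeNone : ∀ x : Fin N ⊕ Fin M, (none ∈ G'.neighborSet (some x)) ↔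
        (x = Sum.inl u ∨ x = Sum.inl v) := by
      intro x
      rw [SimpleGraph.mem_neighborSet, SimpleGraph.adj_comm, hG', triExt_adj_none]
      simp [eq_comm]
    by_cases hcase : Sum.inl u ∈ S ∨ Sum.inl v ∈ S
    · -- S meets {inl u, inl v}: use insert none (S.image some)
      have hadjuv : G.Adj (Sum.inl u) (Sum.inl v) := (matchTri_adj_inl N M f g u v).mpr huv
      have hTuv : ∀ y : Fin N ⊕ Fin M, (y = Sum.inl u ∨ y = Sum.inl v) → y ∈ T := by
        rintro y hy
        rcases hcase with hc | hc
        · rcases hy with rfl | rfl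
          · exact Or.inl (Finset.mem_coe.mpr hc)
          · exact Or.inr (Set.mem_biUnion hc hadjuv)
        · rcases hy with rfl | rfl
          · exact Or.inr (Set.mem_biUnion hc hadjuv.symm)
          · exact Or.inl (Finset.mem_coe.mpr hc)
      have hnm : (none : Option (Fin N ⊕ Fin M)) ∉ S.image some := by simp
      have h := hd2 (insert none (S.image some)) ⟨none, Finset.mem_insert_self _ _⟩
      have hsum2 : ∑ i ∈ insert none (S.image some), d i = 2 + ∑ i ∈ S, d (some i) := by
        rw [Finset.sum_insert hnm, Finset.sum_image (by simp), h2]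
      have hset : ((insert none (S.image some) : Finset (Option (Fin N ⊕ Fin M))) : Set _)
            ∪ ⋃ i ∈ insert none (S.image some), G'.neighborSet i
          = insert none (some '' T) := by
        rw [Finset.set_biUnion_insert, Finset.set_biUnion_finset_image,
          Finset.coe_insert, Finset.coe_image, hNnone]
        ext b
        match b with
        | none => simp
        | some y =>
          simp only [Set.mem_union, Set.mem_insert_iff, Set.mem_image, Set.mem_iUnion,
            Set.mem_singleton_iff, exists_prop, Finset.mem_coe, hNsome,
            Option.some.injEq, reduceCtorEq, false_or]
          constructor
          · rintro ((⟨x, hxS, rfl⟩) | ((rfl | rfl) | ⟨x, hxS, hadj⟩))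
            · exact ⟨x, Or.inl (Finset.mem_coe.mpr hxS), rfl⟩
            · exact ⟨_, hTuv _ (Or.inl rfl), rfl⟩
            · exact ⟨_, hTuv _ (Or.inr rfl), rfl⟩
            · exact ⟨y, Or.inr (Set.mem_biUnion hxS hadj), rfl⟩
          · rintro ⟨y', hy', rfl⟩
            rcases hy' with hy | hy
            · exact Or.inl ⟨y', Finset.mem_coe.mp hy, rfl⟩
            · obtain ⟨x, hxS, hadj⟩ := Set.mem_iUnion₂.mp hy
              exact Or.inr (Or.inr ⟨x, hxS, hadj⟩)
      have hnc : (insert none (some '' T)).ncard = T.ncard + 1 := by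
        rw [Set.ncard_insert_of_notMem (by simp),
          Set.ncard_image_of_injective _ (Option.some_injective _)]
      rw [hsum2, hset, hnc] at h
      have hle : (if a ∈ S then 1 else 0) ≤ 1 := by split <;> omega
      omega
    · -- S misses {inl u, inl v}
      push_neg at hcase
      have haS : a ∉ S := by rcases ha with rfl | rfl <;> tauto
      rw [if_neg haS]
      have h := hd2 (S.image some) (hS.image _)
      have hsum1 : ∑ i ∈ S.image some, d i = ∑ i ∈ S, d (some i) :=
        Finset.sum_image (by simp)
      have hset : ((S.image some : Finset (Option (Fin N ⊕ Fin M))) : Set _)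
            ∪ ⋃ i ∈ S.image some, G'.neighborSet i = some '' T := by
        rw [Finset.set_biUnion_finset_image, Finset.coe_image]
        ext b
        match b with
        | none =>
          simp only [Set.mem_union, Set.mem_image, Set.mem_iUnion, exists_prop,
            Finset.mem_coe]
          constructor
          · rintro (⟨x, hxS, hx⟩ | ⟨x, hxS, hx⟩)
            · exact absurd hx (by simp)
            · rcases (hNsomeNone x).mp hx with rfl | rfl
              · exact absurd hxS hcase.1
              · exact absurd hxS hcase.2
          · rintro ⟨y, _, hb⟩
            exact absurd hb (by simp)
        | some y =>
          simp only [Set.mem_union, Set.mem_image, Set.mem_iUnion, exists_prop,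
            Finset.mem_coe, hNsome, Option.some.injEq]
          constructor
          · rintro (⟨x, hxS, rfl⟩ | ⟨x, hxS, hadj⟩)
            · exact ⟨x, Or.inl (Finset.mem_coe.mpr hxS), rfl⟩
            · exact ⟨y, Or.inr (Set.mem_biUnion hxS hadj), rfl⟩
          · rintro ⟨y', hy', rfl⟩
            rcases hy' with hy | hy
            · exact Or.inl ⟨y', Finset.mem_coe.mp hy, rfl⟩
            · obtain ⟨x, hxS, hadj⟩ := Set.mem_iUnion₂.mp hy
              exact Or.inr ⟨x, hxS, hadj⟩
      rw [hsum1, hset, Set.ncard_image_of_injective _ (Option.some_injective _)] at h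
      omega

/-- With `G = K_N △ 𝓜`, `e = uv` disjoint from the matching, and
`G' = K_N △ (𝓜 ∪ {e})` (new vertex `w = none`): if `d` is a `D(G')`-draconian sequence
with `d w = 2`, then deleting coordinate `w` and adding `1` to the `u`-entry, respectively
to the `v`-entry, both yield `D(G)`-draconian sequences. -/
theorem stmt9 (N M : ℕ) (hN : 2 ≤ N) (f g : Fin M → Fin N)
    (hmatch : Function.Injective (Sum.elim f g : Fin M ⊕ Fin M → Fin N))
    (u v : Fin N) (huv : u ≠ v)
    (hdisj : ∀ i : Fin M, u ≠ f i ∧ u ≠ g i ∧ v ≠ f i ∧ v ≠ g i)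
    (d : Option (Fin N ⊕ Fin M) → ℕ)
    (hd : DraconianD (triExt (MatchTri N M f g) (Sum.inl u) (Sum.inl v)) d)
    (h2 : d none = 2) :
    DraconianD (MatchTri N M f g)
        (fun x => d (some x) + if x = Sum.inl u then 1 else 0) ∧
      DraconianD (MatchTri N M f g)
        (fun x => d (some x) + if x = Sum.inl v then 1 else 0) := by
  exact ⟨key9 N M hN f g u v huv d hd h2 (Sum.inl u) (Or.inl rfl),
    key9 N M hN f g u v huv d hd h2 (Sum.inl v) (Or.inr rfl)⟩
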